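/- In a directed graph with dart capacities, the value of the minimum st-cut equals the value of the maximum st-flow (Max-flow Min-cut theorem for the dart/asymmetric-capacity setting). -/

import Mathlib

open Finset

variable {V D F : Type}

/-- `p` is a path of darts from `u` to `v`. -/
def IsPathFrom (head tail : D → V) : V → V → List D → Prop
  | u, v, [] => u = v
  | u, v, d :: p => tail d = u ∧ IsPathFrom head tail (head d) v p

/-- The vertices visited by a path starting at `u`. -/
def pathVertices (head : D → V) (u : V) (p : List D) : List V := u :: p.map head

/-- A path (or cycle) is residual iff every dart has strictly positive (residual) capacity. -/
def IsResidual (c : D → ℝ) (p : List D) : Prop := ∀ d ∈ p, 0 < c d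

/-- Net flow into a vertex: sum of flow over darts whose head is `v`. -/
def netInto [Fintype D] [DecidableEq V] (head : D → V) (f : D → ℝ) (v : V) : ℝ :=
  ∑ d ∈ Finset.univ.filter (fun d => head d = v), f d

/-- `f` is a flow w.r.t. capacities `c`: antisymmetric, capacity-respecting,
balanced at every vertex other than `s` and `t`. -/
def IsFlow [Fintype D] [DecidableEq V] (head tail : D → V) (rev : D → D)
    (c f : D → ℝ) (s t : V) : Prop :=
  (∀ d, f (rev d) = - f d) ∧ (∀ d, f d ≤ c d) ∧
  ∀ v, v ≠ s → v ≠ t → netInto head f v = 0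

/-- The value of a flow: net flow entering the sink `t`. -/
def flowValue [Fintype D] [DecidableEq V] (head : D → V) (f : D → ℝ) (t : V) : ℝ :=
  netInto head f t

/-- An -cut: a set of darts meeting every -to- path. -/
def IsCut [DecidableEq D] (head tail : D → V) (s t : V) (C : Finset D) : Prop :=
  ∀ p, IsPathFrom head tail s t p → ∃ d ∈ p, d ∈ C

/-- The value of a cut: total capacity of its darts. -/
def cutValue [DecidableEq D] (c : D → ℝ) (C : Finset D) : ℝ := ∑ d ∈ C, c d


section MFMC

variable [Fintype V] [Fintype D] [DecidableEq V] [DecidableEq D]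

theorem path_append {head tail : D → V} {u v w : V} {p q : List D}
    (hp : IsPathFrom head tail u v p) (hq : IsPathFrom head tail v w q) :
    IsPathFrom head tail u w (p ++ q) := by
  induction p generalizing u with
  | nil =>
    have h : u = v := hp
    subst h; exact hq
  | cons d p ih => exact ⟨hp.1, ih hp.2⟩

theorem path_cross {head tail : D → V} (P : V → Prop) {u v : V} {p : List D}
    (hp : IsPathFrom head tail u v p) (hu : P u) (hv : ¬ P v) :
    ∃ d ∈ p, P (tail d) ∧ ¬ P (head d) := by
  induction p generalizing u with
  | nil =>
    have h : u = v := hp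
    exact absurd (h ▸ hu) hv
  | cons d p ih =>
    by_cases h : P (head d)
    · obtain ⟨e, he, h1, h2⟩ := ih hp.2 h
      exact ⟨e, List.mem_cons_of_mem _ he, h1, h2⟩
    · exact ⟨d, List.mem_cons_self, hp.1.symm ▸ hu, h⟩

theorem sum_count_map (g : D → V) (v : V) (p : List D) :
    ∑ d ∈ Finset.univ.filter (fun d => g d = v), (p.count d : ℝ)
      = ((p.map g).count v : ℕ) := by
  induction p with
  | nil => simp
  | cons a p ih =>
    simp only [List.count_cons, List.map_cons, Nat.cast_add]
    push_cast
    rw [Finset.sum_add_distrib, ih]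
    congr 1
    simp only [beq_iff_eq]
    rw [Finset.sum_ite_eq (Finset.univ.filter (fun d => g d = v)) a (fun _ => (1:ℝ))]
    simp [eq_comm]

theorem path_count_diff {head tail : D → V} {u w : V} {p : List D}
    (hp : IsPathFrom head tail u w p) (v : V) :
    (((p.map head).count v : ℕ) : ℝ) - (((p.map tail).count v : ℕ) : ℝ) =
      (if v = w then 1 else 0) - (if v = u then 1 else 0) := by
  induction p generalizing u with
  | nil =>
    have h : u = w := hp
    subst h; simp
  | cons d p ih =>
    obtain ⟨h1, h2⟩ := hp
    have hih := ih h2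
    subst h1
    simp only [List.map_cons, List.count_cons] at *
    push_cast at *
    split_ifs at * <;> simp_all <;> linarith

theorem flow_cross {head tail : D → V} {rev : D → D}
    (hrev : ∀ d, rev (rev d) = d) (hheadrev : ∀ d, head (rev d) = tail d)
    {c f : D → ℝ} {s t : V} (hf : IsFlow head tail rev c f s t)
    (P : V → Prop) [DecidablePred P] (hPs : P s) (hPt : ¬ P t) :
    flowValue head f t
      = ∑ d ∈ Finset.univ.filter (fun d => P (tail d) ∧ ¬ P (head d)), f d := by
  have step1 : flowValue head f t
      = ∑ v ∈ Finset.univ.filter (fun v => ¬ P v), netInto head f v := by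
    rw [Finset.sum_eq_single_of_mem t (by simp [hPt])]
    · rfl
    · intro v hv hvt
      refine hf.2.2 v (fun h => absurd hPs ?_) hvt
      exact h ▸ (Finset.mem_filter.1 hv).2
  have step2 : ∑ v ∈ Finset.univ.filter (fun v => ¬ P v), netInto head f v
      = ∑ d ∈ Finset.univ.filter (fun d => ¬ P (head d)), f d := by
    rw [← Finset.sum_fiberwise_of_maps_to
      (g := head) (t := Finset.univ.filter (fun v => ¬ P v))
      (fun d hd => by
        simp only [Finset.mem_filter, Finset.mem_univ, true_and] at *
        exact hd) f]
    refine Finset.sum_congr rfl (fun v hv => ?_)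
    have hv' : ¬ P v := (Finset.mem_filter.1 hv).2
    refine Finset.sum_congr ?_ (fun _ _ => rfl)
    ext d
    simp only [Finset.mem_filter, Finset.mem_univ, true_and]
    constructor
    · intro h; exact ⟨h.symm ▸ hv', h⟩
    · rintro ⟨-, h⟩; exact h
  have hzero : ∑ d ∈ (Finset.univ.filter
      (fun d => ¬ P (head d))).filter (fun d => ¬ P (tail d)), f d = 0 := by
    apply Finset.sum_involution (fun d _ => rev d)
    · intro d _; rw [hf.1]; ring
    · intro d _ hfd hrevd
      apply hfd
      have h := hf.1 d
      rw [hrevd] at h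
      linarith
    · intro d hd
      simp only [Finset.mem_filter, Finset.mem_univ, true_and] at hd ⊢
      constructor
      · rw [hheadrev]; exact hd.2
      · have h : tail (rev d) = head d := by rw [← hheadrev (rev d), hrev]
        rw [h]; exact hd.1
    · intro d _; exact hrev d
  have step3 : ∑ d ∈ Finset.univ.filter (fun d => ¬ P (head d)), f d
      = ∑ d ∈ Finset.univ.filter (fun d => P (tail d) ∧ ¬ P (head d)), f d := by
    rw [← Finset.sum_filter_add_sum_filter_not
      (Finset.univ.filter (fun d => ¬ P (head d))) (fun d => P (tail d)) f, hzero,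
      add_zero]
    refine Finset.sum_congr ?_ (fun _ _ => rfl)
    rw [Finset.filter_filter]
    ext d
    simp only [Finset.mem_filter, Finset.mem_univ, true_and]
    tauto
  rw [step1, step2, step3]

theorem augment {head tail : D → V} {rev : D → D}
    (hrev : ∀ d, rev (rev d) = d) (hheadrev : ∀ d, head (rev d) = tail d)
    {c f : D → ℝ} {s t : V} (hf : IsFlow head tail rev c f s t) (hst : s ≠ t)
    {p : List D} (hp : IsPathFrom head tail s t p) (hres : ∀ d ∈ p, f d < c d) :
    ∃ f', IsFlow head tail rev c f' s t ∧ flowValue head f t < flowValue head f' t := by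
  have hpne : p ≠ [] := by rintro rfl; exact hst hp
  obtain ⟨d0, hd0⟩ := List.exists_mem_of_ne_nil p hpne
  have htfne : p.toFinset.Nonempty := ⟨d0, List.mem_toFinset.2 hd0⟩
  set m := p.toFinset.inf' htfne (fun d => c d - f d) with hm_def
  have hm : 0 < m := by
    rw [Finset.lt_inf'_iff]
    intro d hd
    exact sub_pos.2 (hres d (List.mem_toFinset.1 hd))
  have hn : (0:ℝ) < p.length := by
    exact_mod_cast List.length_pos_iff.2 hpne
  set ε := m / p.length with hε_def
  have hε : 0 < ε := div_pos hm hn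
  set f' := fun d => f d + ε * ((p.count d : ℝ) - (p.count (rev d) : ℝ)) with hf'_def
  have hnet : ∀ v, netInto head f' v = netInto head f v +
      ε * ((if v = t then 1 else 0) - (if v = s then 1 else 0)) := by
    intro v
    have h1 := sum_count_map head v p
    have h2 : ∑ d ∈ Finset.univ.filter (fun d => head d = v), (p.count (rev d) : ℝ)
        = (((p.map tail).count v : ℕ) : ℝ) := by
      rw [← sum_count_map tail v p]
      apply Finset.sum_nbij' (i := fun d => rev d) (j := fun d => rev d)
      · intro d hd
        simp only [Finset.mem_filter, Finset.mem_univ, true_and] at hd ⊢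
        rw [← hheadrev (rev d), hrev]
        exact hd
      · intro d hd
        simp only [Finset.mem_filter, Finset.mem_univ, true_and] at hd ⊢
        rw [hheadrev]
        exact hd
      · intro d _; exact hrev d
      · intro d _; exact hrev d
      · intro d _; rfl
    have h3 := path_count_diff hp v
    simp only [netInto, hf'_def]
    rw [Finset.sum_add_distrib, ← Finset.mul_sum, Finset.sum_sub_distrib, h1, h2, h3]
  refine ⟨f', ⟨?_, ?_, ?_⟩, ?_⟩
  · intro d
    simp only [hf'_def]
    rw [hrev, hf.1]
    ring
  · intro d
    by_cases hd : d ∈ p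
    · have h1 : (p.count d : ℝ) ≤ p.length := by
        exact_mod_cast List.count_le_length
      have h2 : (0:ℝ) ≤ p.count (rev d) := Nat.cast_nonneg _
      have h3 : m ≤ c d - f d := Finset.inf'_le _ (List.mem_toFinset.2 hd)
      have h4 : ε * ((p.count d : ℝ) - (p.count (rev d) : ℝ)) ≤ ε * p.length :=
        mul_le_mul_of_nonneg_left (by linarith) hε.le
      have h5 : ε * p.length = m := div_mul_cancel₀ m hn.ne'
      simp only [hf'_def]
      linarith
    · have h1 : p.count d = 0 := List.count_eq_zero.2 hd
      have h2 : (0:ℝ) ≤ p.count (rev d) := Nat.cast_nonneg _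
      have h4 : ε * ((p.count d : ℝ) - (p.count (rev d) : ℝ)) ≤ 0 := by
        rw [h1]
        push_cast
        nlinarith
      have := hf.2.1 d
      simp only [hf'_def]
      linarith
  · intro v hvs hvt
    rw [hnet v, hf.2.2 v hvs hvt]
    simp [hvs, hvt]
  · show flowValue head f t < netInto head f' t
    rw [hnet t]
    have e1 : (if t = t then (1:ℝ) else 0) = 1 := if_pos rfl
    have e2 : (if t = s then (1:ℝ) else 0) = 0 := if_neg (Ne.symm hst)
    rw [e1, e2]
    show netInto head f t < _
    linarith

end MFMC

/-- **Max-flow Min-cut** in the dart / asymmetric-capacity setting: the value of the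
minimum `st`-cut equals the value of the maximum `st`-flow. -/
theorem maxflow_eq_mincut [Fintype V] [Fintype D] [DecidableEq V] [DecidableEq D]
    (head tail : D → V) (rev : D → D)
    (hrev : ∀ d, rev (rev d) = d) (hheadrev : ∀ d, head (rev d) = tail d)
    (c : D → ℝ) (hc : ∀ d, 0 ≤ c d) (s t : V)
    (vmax vmin : ℝ)
    (hmax : IsGreatest {v | ∃ f, IsFlow head tail rev c f s t ∧ flowValue head f t = v} vmax)
    (hmin : IsLeast {v | ∃ C, IsCut head tail s t C ∧ cutValue c C = v} vmin) :
    vmax = vmin := by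
  classical
  obtain ⟨⟨f, hf, hfv⟩, hub⟩ := hmax
  obtain ⟨⟨C0, hC0, hC0v⟩, hlb⟩ := hmin
  have hst : s ≠ t := by
    rintro rfl
    obtain ⟨d, hd, -⟩ := hC0 [] rfl
    simp at hd
  have weak : vmax ≤ vmin := by
    set P : V → Prop := fun v => ∃ q, IsPathFrom head tail s v q ∧ ∀ d ∈ q, d ∉ C0 with hP
    have hPs : P s := ⟨[], rfl, by simp⟩
    have hPt : ¬ P t := by
      rintro ⟨q, hq, hqC⟩
      obtain ⟨d, hd, hdC⟩ := hC0 q hq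
      exact hqC d hd hdC
    have hcr := flow_cross hrev hheadrev hf P hPs hPt
    have hsub : Finset.univ.filter (fun d => P (tail d) ∧ ¬ P (head d)) ⊆ C0 := by
      intro d hd
      obtain ⟨⟨q, hq, hqC⟩, h2⟩ := (Finset.mem_filter.1 hd).2
      by_contra hdC
      refine h2 ⟨q ++ [d], path_append hq ⟨rfl, rfl⟩, ?_⟩
      intro e he
      rcases List.mem_append.1 he with h | h
      · exact hqC e h
      · simp only [List.mem_singleton] at h
        subst h
        exact hdC
    calc vmax = flowValue head f t := hfv.symm
      _ = ∑ d ∈ Finset.univ.filter (fun d => P (tail d) ∧ ¬ P (head d)), f d := hcr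
      _ ≤ ∑ d ∈ Finset.univ.filter (fun d => P (tail d) ∧ ¬ P (head d)), c d :=
          Finset.sum_le_sum (fun d _ => hf.2.1 d)
      _ ≤ ∑ d ∈ C0, c d :=
          Finset.sum_le_sum_of_subset_of_nonneg hsub (fun d _ _ => hc d)
      _ = vmin := hC0v
  have strong : vmin ≤ vmax := by
    set P : V → Prop := fun v =>
      ∃ q, IsPathFrom head tail s v q ∧ IsResidual (fun d => c d - f d) q with hP
    have hPs : P s := ⟨[], rfl, fun d hd => absurd hd List.not_mem_nil⟩
    have hPt : ¬ P t := by
      rintro ⟨q, hq, hqr⟩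
      obtain ⟨f', hf', hlt⟩ := augment hrev hheadrev hf hst hq
        (fun d hd => sub_pos.mp (hqr d hd))
      have hle := hub ⟨f', hf', rfl⟩
      rw [hfv] at hlt
      linarith
    set C := Finset.univ.filter (fun d => P (tail d) ∧ ¬ P (head d)) with hC
    have hcut : IsCut head tail s t C := by
      intro q hq
      obtain ⟨d, hd, h1, h2⟩ := path_cross P hq hPs hPt
      exact ⟨d, hd, Finset.mem_filter.2 ⟨Finset.mem_univ d, h1, h2⟩⟩
    have hsat : ∀ d ∈ C, c d = f d := by
      intro d hd
      obtain ⟨⟨q, hq, hqr⟩, h2⟩ := (Finset.mem_filter.1 hd).2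
      by_contra hne
      have hlt : f d < c d := lt_of_le_of_ne (hf.2.1 d) (fun h => hne h.symm)
      refine h2 ⟨q ++ [d], path_append hq ⟨rfl, rfl⟩, ?_⟩
      intro e he
      rcases List.mem_append.1 he with h | h
      · exact hqr e h
      · simp only [List.mem_singleton] at h
        subst h
        exact sub_pos.2 hlt
    have hcv : cutValue c C = vmax := by
      rw [cutValue, Finset.sum_congr rfl hsat,
        ← flow_cross hrev hheadrev hf P hPs hPt, hfv]
    exact hlb ⟨C, hcut, hcv⟩
  linarith
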